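/- Let d, d' ≥ 1 with d ≤ d', k ≥ 1, and let Φ_{A,a} (A ∈ Fin k, a ∈ Fin d) be vectors in EuclideanSpace ℂ (Fin d' × Fin d) satisfying the MUB Gram condition ⟨Φ_{A,a}, Φ_{A',a'}⟩ = δ_{A,A'}δ_{a,a'} + (1−δ_{A,A'})/d. Let s : Fin (d·d') → Fin k → Fin d be any function. Then the following are equivalent: (i) there exists an orthonormal basis (e_I)_{I ∈ Fin (d·d')} of EuclideanSpace ℂ (Fin d' × Fin d) such that ⟨e_I, Φ_{A,a}⟩ = 0 whenever s(I)(A) ≠ a; (ii) there exists a matrix H : Matrix (Fin (d·d')) (Fin k × Fin d) ℂ such that H(I,(A,a)) = 0 whenever s(I)(A) ≠ a, and (Hᴴ · H)((A,a),(A',a')) = δ_{A,A'}δ_{a,a'} + (1−δ_{A,A'})/d for all A, A', a, a'. -/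

import Mathlib

open scoped InnerProductSpace
open Matrix

/-- Two finite families with equal Gram matrices in a finite-dimensional complex inner
product space are related by a full isometry of the space. -/
lemma exists_linearIsometryEquiv_of_gram_eq
    {ι V : Type*} [Fintype ι] [DecidableEq ι]
    [NormedAddCommGroup V] [InnerProductSpace ℂ V] [FiniteDimensional ℂ V]
    (v w : ι → V) (h : ∀ i j, ⟪v i, v j⟫_ℂ = ⟪w i, w j⟫_ℂ) :
    ∃ U : V ≃ₗᵢ[ℂ] V, ∀ i, U (v i) = w i := by
  classical
  set L : (ι → ℂ) →ₗ[ℂ] V := Fintype.linearCombination ℂ v with hL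
  set L' : (ι → ℂ) →ₗ[ℂ] V := Fintype.linearCombination ℂ w with hL'
  have key : ∀ x y : ι → ℂ, ⟪L x, L y⟫_ℂ = ⟪L' x, L' y⟫_ℂ := by
    intro x y
    simp only [hL, hL', Fintype.linearCombination_apply, sum_inner, inner_sum,
      inner_smul_left, inner_smul_right]
    refine Finset.sum_congr rfl fun i _ => congrArg _ (Finset.sum_congr rfl fun j _ => ?_)
    rw [h j i]
  have hker : LinearMap.ker L ≤ LinearMap.ker L' := by
    intro x hx
    rw [LinearMap.mem_ker] at hx ⊢
    have : ⟪L' x, L' x⟫_ℂ = 0 := by rw [← key, hx, inner_zero_right]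
    exact inner_self_eq_zero.mp this
  set g : ((ι → ℂ) ⧸ LinearMap.ker L) →ₗ[ℂ] V := (LinearMap.ker L).liftQ L' hker with hg
  set f : LinearMap.range L →ₗ[ℂ] V :=
    g ∘ₗ (LinearMap.quotKerEquivRange L).symm.toLinearMap with hf
  have hfL : ∀ x : ι → ℂ, f ⟨L x, LinearMap.mem_range_self L x⟩ = L' x := by
    intro x
    have h1 : (LinearMap.quotKerEquivRange L).symm ⟨L x, LinearMap.mem_range_self L x⟩
        = Submodule.Quotient.mk x := LinearMap.quotKerEquivRange_symm_apply_image L x _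
    simp only [hf, LinearMap.comp_apply, LinearEquiv.coe_toLinearMap, h1, hg,
      Submodule.liftQ_apply]
  have hinner : ∀ u u' : LinearMap.range L, ⟪f u, f u'⟫_ℂ = ⟪u, u'⟫_ℂ := by
    rintro ⟨-, x, rfl⟩ ⟨-, y, rfl⟩
    rw [hfL x, hfL y, Submodule.coe_inner, ← key]
  set J : LinearMap.range L →ₗᵢ[ℂ] V := f.isometryOfInner hinner with hJ
  set U₀ : V →ₗᵢ[ℂ] V := J.extend with hU₀
  have hU₀v : ∀ i, U₀ (v i) = w i := by
    intro i
    have hv : v i = L (Pi.single i 1) := by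
      simp [hL, Fintype.linearCombination_apply_single]
    have hw : w i = L' (Pi.single i 1) := by
      simp [hL', Fintype.linearCombination_apply_single]
    have hmem : v i ∈ LinearMap.range L := hv ▸ LinearMap.mem_range_self L _
    have := J.extend_apply ⟨v i, hmem⟩
    rw [hU₀]
    rw [show ((⟨v i, hmem⟩ : LinearMap.range L) : V) = v i from rfl] at this
    rw [this, hJ, LinearMap.coe_isometryOfInner]
    have : (⟨v i, hmem⟩ : LinearMap.range L) = ⟨L (Pi.single i 1), LinearMap.mem_range_self L _⟩ := by
      ext; exact hv
    rw [this, hfL, ← hw]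
  have hsurj : Function.Surjective U₀ :=
    LinearMap.surjective_of_injective U₀.injective
  refine ⟨LinearIsometryEquiv.ofSurjective U₀ hsurj, fun i => ?_⟩
  rw [LinearIsometryEquiv.coe_ofSurjective]
  exact hU₀v i

/-- **Criterion for a solution to the Mean King's problem (Theorem 1 of the paper).**
A solution (an orthonormal basis satisfying the survival condition for the estimation
function `s`) exists if and only if there is a matrix `H` vanishing where `s` predicts
a different outcome and whose Gram matrix `Hᴴ * H` is the MUB Gram matrix. -/
theorem mean_king_criterion
    (d d' k : ℕ) (hd : 1 ≤ d) (hdd' : d ≤ d') (hk : 1 ≤ k)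
    (Φ : Fin k → Fin d → EuclideanSpace ℂ (Fin d' × Fin d))
    (hGram : ∀ (A A' : Fin k) (a a' : Fin d),
      ⟪Φ A a, Φ A' a'⟫_ℂ =
        if A = A' then (if a = a' then 1 else 0) else 1 / (d : ℂ))
    (s : Fin (d * d') → Fin k → Fin d) :
    (∃ e : OrthonormalBasis (Fin (d * d')) ℂ (EuclideanSpace ℂ (Fin d' × Fin d)),
        ∀ (I : Fin (d * d')) (A : Fin k) (a : Fin d),
          s I A ≠ a → ⟪e I, Φ A a⟫_ℂ = 0) ↔
    (∃ H : Matrix (Fin (d * d')) (Fin k × Fin d) ℂ,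
        (∀ (I : Fin (d * d')) (A : Fin k) (a : Fin d),
          s I A ≠ a → H I (A, a) = 0) ∧
        (∀ (A A' : Fin k) (a a' : Fin d),
          (Hᴴ * H) (A, a) (A', a') =
            if A = A' then (if a = a' then 1 else 0) else 1 / (d : ℂ))) := by

  constructor
  · rintro ⟨e, he⟩
    set H0 : Matrix (Fin (d * d')) (Fin k × Fin d) ℂ :=
      Matrix.of fun I p => ⟪e I, Φ p.1 p.2⟫_ℂ with hH0def
    refine ⟨H0, fun I A a h => he I A a h, fun A A' a a' => ?_⟩
    have : (H0ᴴ * H0) (A, a) (A', a') = ⟪Φ A a, Φ A' a'⟫_ℂ := by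
      simp only [Matrix.mul_apply, Matrix.conjTranspose_apply, Matrix.star_apply, hH0def, Matrix.of_apply]
      rw [← e.sum_inner_mul_inner (Φ A a) (Φ A' a')]
      refine Finset.sum_congr rfl fun I _ => ?_
      rw [← inner_conj_symm (Φ A a) (e I), starRingEnd_apply]
    rw [this, hGram]
  · rintro ⟨H, hH0, hHG⟩
    -- the columns of `H` as vectors in `EuclideanSpace ℂ (Fin (d * d'))`
    set v : Fin k × Fin d → EuclideanSpace ℂ (Fin (d * d')) := fun p => WithLp.toLp 2 (fun I => H I p) with hv
    -- transport them to the target space via a reindexing isometry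
    set W : EuclideanSpace ℂ (Fin (d * d')) ≃ₗᵢ[ℂ] EuclideanSpace ℂ (Fin d' × Fin d) :=
      LinearIsometryEquiv.piLpCongrLeft 2 ℂ ℂ
        ((finCongr (mul_comm d d')).trans finProdFinEquiv.symm) with hW
    have hgram : ∀ p q : Fin k × Fin d, ⟪W (v p), W (v q)⟫_ℂ = ⟪Φ p.1 p.2, Φ q.1 q.2⟫_ℂ := by
      rintro ⟨A, a⟩ ⟨A', a'⟩
      rw [LinearIsometryEquiv.inner_map_map]
      have : ⟪v (A, a), v (A', a')⟫_ℂ = (Hᴴ * H) (A, a) (A', a') := by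
        simp only [PiLp.inner_apply, RCLike.inner_apply, Matrix.mul_apply,
          Matrix.conjTranspose_apply, Matrix.star_apply, hv, starRingEnd_apply, PiLp.toLp_apply]
        exact Finset.sum_congr rfl fun _ _ => mul_comm _ _
      rw [this, hHG, hGram]
    obtain ⟨U, hU⟩ := exists_linearIsometryEquiv_of_gram_eq (fun p => W (v p))
      (fun p => Φ p.1 p.2) (fun p q => by rw [hgram p q])
    refine ⟨(EuclideanSpace.basisFun (Fin (d * d')) ℂ).map (W.trans U), fun I A a hne => ?_⟩
    rw [OrthonormalBasis.map_apply]
    have hΦ : Φ A a = U (W (v (A, a))) := (hU (A, a)).symm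
    rw [hΦ]
    rw [show (W.trans U) ((EuclideanSpace.basisFun (Fin (d * d')) ℂ) I)
        = U (W ((EuclideanSpace.basisFun (Fin (d * d')) ℂ) I)) from rfl]
    rw [LinearIsometryEquiv.inner_map_map, LinearIsometryEquiv.inner_map_map]
    have : ((EuclideanSpace.basisFun (Fin (d * d')) ℂ) I) = EuclideanSpace.single I 1 :=
      EuclideanSpace.basisFun_apply _ _ _
    rw [this, EuclideanSpace.inner_single_left]
    simp only [_root_.map_one, one_mul, hv, PiLp.toLp_apply]
    exact hH0 I A a hne
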